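/- arXiv:2402.17223 — 6 statements merged into one kernel-verified Lean document; each statement's English description precedes it below -/
import Mathlib

section
/- For every real number I, all integers m ≥ 1, and all integers l and n with 0 ≤ n < l, the success-probability function satisfies the two-dimensional random-walk recursion F_I(l,m,n) = I·F_I(l,m−1,n) + (1−I)·F_I(l,m+1,n+1). -/
/-- `pathCount i m` is the number of sequences `(s 1, …, s (m+2i+1))` with every entry `±1`,
exactly `i` entries equal to `+1` (hence `m+i+1` entries equal to `-1`), such that
`m + s 1 + ⋯ + s T ≥ 0` for every `T ≤ m + 2i` (the walk started at `m` first reaches `-1`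
exactly at the final step). -/
noncomputable def pathCount (i m : ℕ) : ℕ :=
  Nat.card {s : Fin (m + 2 * i + 1) → ℤ //
    (∀ t, s t = 1 ∨ s t = -1) ∧
    (Finset.univ.filter fun t => s t = 1).card = i ∧
    ∀ T : ℕ, T ≤ m + 2 * i →
      0 ≤ (m : ℤ) + ∑ t ∈ Finset.univ.filter (fun t : Fin (m + 2 * i + 1) => (t : ℕ) < T), s t}

def P (i m N : ℕ) (s : Fin N → ℤ) : Prop :=
  (∀ t, s t = 1 ∨ s t = -1) ∧
  (Finset.univ.filter fun t => s t = 1).card = i ∧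
  ∀ T : ℕ, T ≤ m + 2 * i →
    0 ≤ (m : ℤ) + ∑ t ∈ Finset.univ.filter (fun t : Fin N => (t : ℕ) < T), s t

lemma pathCount_eq (i m : ℕ) : pathCount i m = Nat.card {s : Fin (m+2*i+1) → ℤ // P i m (m+2*i+1) s} := rfl

instance (i m N : ℕ) : Finite {s : Fin N → ℤ // P i m N s} := by
  apply Finite.of_injective (f := fun s : {s : Fin N → ℤ // P i m N s} => fun t => decide (s.1 t = 1))
  rintro ⟨s, hs⟩ ⟨s', hs'⟩ h
  ext t
  have ht := congrFun h t
  simp only [decide_eq_decide] at ht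
  rcases hs.1 t with h1 | h1 <;> rcases hs'.1 t with h2 | h2 <;> simp [h1, h2] at ht ⊢

lemma filter_cons_card (L : ℕ) (a : ℤ) (v : Fin L → ℤ) :
    (Finset.univ.filter fun t : Fin (L+1) => (Fin.cons a v : Fin (L+1) → ℤ) t = 1).card
      = (if a = 1 then 1 else 0) + (Finset.univ.filter fun t : Fin L => v t = 1).card := by
  classical
  rw [Finset.card_filter, Finset.card_filter, Fin.sum_univ_succ]
  simp

lemma sum_cons_zero (L : ℕ) (a : ℤ) (v : Fin L → ℤ) :
    ∑ t ∈ Finset.univ.filter (fun t : Fin (L+1) => (t:ℕ) < 0), (Fin.cons a v : Fin (L+1) → ℤ) t = 0 := by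
  simp

lemma sum_cons_succ (L : ℕ) (a : ℤ) (v : Fin L → ℤ) (T : ℕ) :
    ∑ t ∈ Finset.univ.filter (fun t : Fin (L+1) => (t:ℕ) < T+1), (Fin.cons a v : Fin (L+1) → ℤ) t
      = a + ∑ t ∈ Finset.univ.filter (fun t : Fin L => (t:ℕ) < T), v t := by
  rw [Finset.sum_filter, Finset.sum_filter, Fin.sum_univ_succ]
  simp [Fin.val_succ, Nat.succ_lt_succ_iff]

lemma prefix_cons (L : ℕ) (a c : ℤ) (v : Fin L → ℤ) (B : ℕ) (hc : 0 ≤ c)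
    (h : ∀ T ≤ B, 0 ≤ (c + a) + ∑ t ∈ Finset.univ.filter (fun t : Fin L => (t:ℕ) < T), v t) :
    ∀ T ≤ B + 1,
      0 ≤ c + ∑ t ∈ Finset.univ.filter (fun t : Fin (L+1) => (t:ℕ) < T),
        (Fin.cons a v : Fin (L+1) → ℤ) t := by
  intro T hT
  cases T with
  | zero => rw [sum_cons_zero]; simpa using hc
  | succ T' => rw [sum_cons_succ]; have := h T' (by omega); linarith

lemma prefix_tail (L : ℕ) (a c : ℤ) (v : Fin L → ℤ) (B : ℕ)
    (h : ∀ T ≤ B + 1,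
      0 ≤ c + ∑ t ∈ Finset.univ.filter (fun t : Fin (L+1) => (t:ℕ) < T),
        (Fin.cons a v : Fin (L+1) → ℤ) t) :
    ∀ T ≤ B, 0 ≤ (c + a) + ∑ t ∈ Finset.univ.filter (fun t : Fin L => (t:ℕ) < T), v t := by
  intro T hT
  have := h (T+1) (by omega)
  rw [sum_cons_succ] at this
  linarith

lemma cons_forall (L : ℕ) (a : ℤ) (v : Fin L → ℤ) (ha : a = 1 ∨ a = -1)
    (hv : ∀ t, v t = 1 ∨ v t = -1) :
    ∀ t, (Fin.cons a v : Fin (L+1) → ℤ) t = 1 ∨ (Fin.cons a v : Fin (L+1) → ℤ) t = -1 := by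
  intro t
  refine Fin.cases ?_ ?_ t
  · simpa using ha
  · intro t'; simpa using hv t'

/-- membership lemmas -/
lemma P_cons_neg (i m L : ℕ) (v : Fin L → ℤ) (hv : P i m L v) :
    P i (m+1) (L+1) (Fin.cons (-1) v) := by
  obtain ⟨h1, h2, h3⟩ := hv
  refine ⟨cons_forall L _ v (by norm_num) h1, ?_, ?_⟩
  · rw [filter_cons_card]; simpa using h2
  · have hB : (m+1) + 2 * i = (m + 2*i) + 1 := by omega
    rw [hB]
    have := prefix_cons L (-1) ((m:ℤ)+1) v (m + 2*i) (by positivity) ?_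
    · intro T hT; have h := this T hT; push_cast; push_cast at h; linarith
    · intro T hT
      have h := h3 T (by omega)
      have : ((m:ℤ)+1) + (-1) = (m:ℤ) := by ring
      rw [this]; exact h

lemma P_cons_pos (i m L : ℕ) (v : Fin L → ℤ) (hv : P i (m+2) L v) :
    P (i+1) (m+1) (L+1) (Fin.cons 1 v) := by
  obtain ⟨h1, h2, h3⟩ := hv
  refine ⟨cons_forall L _ v (by norm_num) h1, ?_, ?_⟩
  · rw [filter_cons_card]; simp [h2]; omega
  · have hB : (m+1) + 2 * (i+1) = ((m+2) + 2*i) + 1 := by omega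
    rw [hB]
    have := prefix_cons L 1 ((m:ℤ)+1) v ((m+2) + 2*i) (by positivity) ?_
    · intro T hT; have h := this T hT; push_cast; push_cast at h; linarith
    · intro T hT
      have h := h3 T (by omega)
      have he : ((m:ℤ)+1) + 1 = ((m:ℤ)+2) := by ring
      rw [he]; push_cast at h ⊢; linarith

lemma P_tail_neg (i m L : ℕ) (v : Fin L → ℤ)
    (hv : P i (m+1) (L+1) (Fin.cons (-1) v)) : P i m L v := by
  obtain ⟨h1, h2, h3⟩ := hv
  refine ⟨fun t => by simpa using h1 t.succ, ?_, ?_⟩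
  · rw [filter_cons_card] at h2; simpa using h2
  · have hB : (m+1) + 2 * i = (m + 2*i) + 1 := by omega
    rw [hB] at h3
    have := prefix_tail L (-1) ((m:ℤ)+1) v (m + 2*i) ?_
    · intro T hT; have h := this T hT; push_cast at h ⊢; linarith
    · intro T hT; have h := h3 T hT; push_cast at h ⊢; linarith

lemma P_tail_pos (i m L : ℕ) (v : Fin L → ℤ)
    (hv : P (i+1) (m+1) (L+1) (Fin.cons 1 v)) : P i (m+2) L v := by
  obtain ⟨h1, h2, h3⟩ := hv
  refine ⟨fun t => by simpa using h1 t.succ, ?_, ?_⟩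
  · rw [filter_cons_card] at h2; simp at h2; omega
  · have hB : (m+1) + 2 * (i+1) = ((m+2) + 2*i) + 1 := by omega
    rw [hB] at h3
    have := prefix_tail L 1 ((m:ℤ)+1) v ((m+2) + 2*i) ?_
    · intro T hT; have h := this T hT; push_cast at h ⊢; linarith
    · intro T hT; have h := h3 T hT; push_cast at h ⊢; linarith

lemma card_P_congr {i m N N' : ℕ} (h : N = N') :
    Nat.card {s : Fin N → ℤ // P i m N s} = Nat.card {s : Fin N' → ℤ // P i m N' s} := by
  subst h; rfl

noncomputable def splitEquiv (i m L : ℕ) :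
    {s : Fin (L+1) → ℤ // P (i+1) (m+1) (L+1) s} ≃
      ({v : Fin L → ℤ // P (i+1) m L v} ⊕ {v : Fin L → ℤ // P i (m+2) L v}) where
  toFun s :=
    if h : s.1 0 = 1 then
      Sum.inr ⟨Fin.tail s.1, P_tail_pos i m L (Fin.tail s.1)
        (by rw [← h, Fin.cons_self_tail]; exact s.2)⟩
    else
      Sum.inl ⟨Fin.tail s.1, P_tail_neg (i+1) m L (Fin.tail s.1)
        (by rw [← (s.2.1 0).resolve_left h, Fin.cons_self_tail]; exact s.2)⟩
  invFun x :=
    match x with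
    | Sum.inl v => ⟨Fin.cons (-1) v.1, P_cons_neg (i+1) m L v.1 v.2⟩
    | Sum.inr v => ⟨Fin.cons 1 v.1, P_cons_pos i m L v.1 v.2⟩
  left_inv := by
    rintro ⟨s, hs⟩
    by_cases h : s 0 = 1
    · simp only [h, dite_true]
      exact Subtype.ext (show Fin.cons 1 (Fin.tail s) = s by
        rw [← h]; exact Fin.cons_self_tail s)
    · simp only [h, dite_false]
      exact Subtype.ext (show Fin.cons (-1) (Fin.tail s) = s by
        rw [← (hs.1 0).resolve_left h]; exact Fin.cons_self_tail s)
  right_inv := by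
    rintro (⟨v, hv⟩ | ⟨v, hv⟩) <;> dsimp only
    · rw [dif_neg (show ¬ (Fin.cons (-1) v : Fin (L+1) → ℤ) 0 = 1 by
        rw [Fin.cons_zero]; norm_num)]
      exact congrArg Sum.inl (Subtype.ext
        (show Fin.tail (Fin.cons (-1) v : Fin (L+1) → ℤ) = v from Fin.tail_cons _ _))
    · rw [dif_pos (show (Fin.cons 1 v : Fin (L+1) → ℤ) 0 = 1 from Fin.cons_zero _ _)]
      exact congrArg Sum.inr (Subtype.ext
        (show Fin.tail (Fin.cons 1 v : Fin (L+1) → ℤ) = v from Fin.tail_cons _ _))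

lemma zero_neg {m L : ℕ} (s : Fin (L+1) → ℤ) (hs : P 0 (m+1) (L+1) s) : s 0 = -1 := by
  rcases hs.1 0 with h | h
  · exfalso
    have hc := hs.2.1
    rw [Finset.card_eq_zero] at hc
    have : (0 : Fin (L+1)) ∈ Finset.univ.filter (fun t => s t = 1) := by simp [h]
    rw [hc] at this
    simp at this
  · exact h

noncomputable def zeroEquiv (m L : ℕ) :
    {s : Fin (L+1) → ℤ // P 0 (m+1) (L+1) s} ≃ {v : Fin L → ℤ // P 0 m L v} where
  toFun s := ⟨Fin.tail s.1, P_tail_neg 0 m L (Fin.tail s.1)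
    (by rw [← zero_neg s.1 s.2, Fin.cons_self_tail]; exact s.2)⟩
  invFun v := ⟨Fin.cons (-1) v.1, P_cons_neg 0 m L v.1 v.2⟩
  left_inv := by
    rintro ⟨s, hs⟩
    exact Subtype.ext (show Fin.cons (-1) (Fin.tail s) = s by
      rw [← zero_neg s hs]; exact Fin.cons_self_tail s)
  right_inv := by
    rintro ⟨v, hv⟩
    exact Subtype.ext (show Fin.tail (Fin.cons (-1) v : Fin (L+1) → ℤ) = v from Fin.tail_cons _ _)

lemma pathCount_succ_succ (i m : ℕ) :
    pathCount (i+1) (m+1) = pathCount (i+1) m + pathCount i (m+2) := by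
  have e0 : pathCount (i+1) (m+1)
      = Nat.card {s : Fin ((m+2*i+3)+1) → ℤ // P (i+1) (m+1) ((m+2*i+3)+1) s} :=
    card_P_congr (by omega)
  have e1 : pathCount (i+1) m
      = Nat.card {v : Fin (m+2*i+3) → ℤ // P (i+1) m (m+2*i+3) v} :=
    card_P_congr (by omega)
  have e2 : pathCount i (m+2)
      = Nat.card {v : Fin (m+2*i+3) → ℤ // P i (m+2) (m+2*i+3) v} :=
    card_P_congr (by omega)
  rw [e0, e1, e2, Nat.card_congr (splitEquiv i m (m+2*i+3)), Nat.card_sum]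

lemma pathCount_zero_succ (m : ℕ) : pathCount 0 (m+1) = pathCount 0 m := by
  have e0 : pathCount 0 (m+1)
      = Nat.card {s : Fin ((m+1)+1) → ℤ // P 0 (m+1) ((m+1)+1) s} :=
    card_P_congr (by omega)
  have e1 : pathCount 0 m = Nat.card {v : Fin (m+1) → ℤ // P 0 m (m+1) v} :=
    card_P_congr (by omega)
  rw [e0, e1, Nat.card_congr (zeroEquiv m (m+1))]

noncomputable def gterm (I : ℝ) (m : ℕ) : ℕ → ℝ
  | 0 => 0
  | j+1 => (1-I) * ((pathCount j (m+2) : ℝ) * (1-I)^j * I^(m+2+1+j))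


/-- `F I l m n = ∑_{i=0}^{l-n-1} a(i,m) (1-I)^i I^(m+1+i)`, the probability that the
attacker's branch, lagging `m` blocks behind when the honest branch has already grown by `n`
blocks, surpasses the honest branch before the honest branch grows by `l` blocks. -/
noncomputable def F (I : ℝ) (l m n : ℕ) : ℝ :=
  ∑ i ∈ Finset.range (l - n), (pathCount i m : ℝ) * (1 - I) ^ i * I ^ (m + 1 + i)

/-- For every real `I`, all integers `m ≥ 1` and `0 ≤ n < l`, the success-probability
function satisfies the two-dimensional random-walk recursion
`F_I(l,m,n) = I·F_I(l,m-1,n) + (1-I)·F_I(l,m+1,n+1)`. -/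
theorem F_recursion (I : ℝ) (l m n : ℕ) (hnl : n < l) :
    F I l (m + 1) n = I * F I l m n + (1 - I) * F I l (m + 2) (n + 1) := by
  obtain ⟨k, hk⟩ : ∃ k, l - n = k + 1 := ⟨l - n - 1, by omega⟩
  have hk' : l - (n+1) = k := by omega
  unfold F
  rw [hk, hk', Finset.mul_sum, Finset.mul_sum]
  have step : ∀ i : ℕ, (pathCount i (m+1) : ℝ) * (1-I)^i * I^(m+1+1+i)
      = I * ((pathCount i m : ℝ) * (1-I)^i * I^(m+1+i)) + gterm I m i := by
    intro i
    match i with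
    | 0 => rw [pathCount_zero_succ]; simp only [gterm]; push_cast; ring
    | j+1 =>
        rw [pathCount_succ_succ]
        simp only [gterm]
        push_cast
        ring
  rw [Finset.sum_congr rfl (fun i _ => step i), Finset.sum_add_distrib,
    Finset.sum_range_succ' (gterm I m) k]
  simp [gterm]
end

section
/- For every real number I and all integers l and n with 0 ≤ n < l, F_I(l,0,n) = I + (1−I)·F_I(l,1,n+1); that is, the random-walk recursion at the boundary m = 0 holds with the convention that the hitting probability from lag −1 equals 1. -/
open Finset

noncomputable def ext' {N : ℕ} (s : Fin N → ℤ) : ℕ → ℤ :=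
  fun j => if h : j < N then s ⟨j, h⟩ else 0

lemma filter_range_lt' (N T : ℕ) (hT : T ≤ N) :
    (Finset.range N).filter (fun j => j < T) = Finset.range T := by
  ext j; simp; omega

lemma sum_filter_lt {N : ℕ} (s : Fin N → ℤ) (T : ℕ) (hT : T ≤ N) :
    ∑ t ∈ Finset.univ.filter (fun t : Fin N => (t : ℕ) < T), s t
      = ∑ j ∈ Finset.range T, ext' s j := by
  rw [Finset.sum_filter]
  have h1 : ∀ t : Fin N, (if (t : ℕ) < T then s t else 0)
      = (fun j => if j < T then ext' s j else 0) (t : ℕ) := by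
    intro t; simp [ext', t.isLt]
  calc ∑ t : Fin N, (if (t : ℕ) < T then s t else 0)
      = ∑ j ∈ Finset.range N, (if j < T then ext' s j else 0) := by
        rw [Finset.sum_congr rfl (fun t _ => h1 t)]
        exact Fin.sum_univ_eq_sum_range (fun j => if j < T then ext' s j else 0) N
    _ = ∑ j ∈ Finset.range T, ext' s j := by
        rw [← Finset.sum_filter, filter_range_lt' N T hT]

lemma card_filter_eq {N : ℕ} (s : Fin N → ℤ) :
    (Finset.univ.filter (fun t : Fin N => s t = 1)).card
      = ∑ j ∈ Finset.range N, if ext' s j = 1 then 1 else 0 := by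
  rw [Finset.card_filter]
  have h1 : ∀ t : Fin N, (if s t = 1 then (1:ℕ) else 0)
      = (fun j => if ext' s j = 1 then (1:ℕ) else 0) (t : ℕ) := by
    intro t; simp [ext', t.isLt]
  rw [Finset.sum_congr rfl (fun t _ => h1 t)]
  exact Fin.sum_univ_eq_sum_range (fun j => if ext' s j = 1 then (1:ℕ) else 0) N


lemma pathCount_zero_zero : pathCount 0 0 = 1 := by
  rw [pathCount, Nat.card_eq_one_iff_unique]
  constructor
  · constructor
    intro a b
    apply Subtype.ext; funext t
    have ha : a.1 t ≠ 1 := by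
      intro h
      have h0 := a.2.2.1
      rw [Finset.card_eq_zero, Finset.eq_empty_iff_forall_notMem] at h0
      exact h0 t (Finset.mem_filter.mpr ⟨Finset.mem_univ t, h⟩)
    have hb : b.1 t ≠ 1 := by
      intro h
      have h0 := b.2.2.1
      rw [Finset.card_eq_zero, Finset.eq_empty_iff_forall_notMem] at h0
      exact h0 t (Finset.mem_filter.mpr ⟨Finset.mem_univ t, h⟩)
    rcases a.2.1 t with h | h
    · exact absurd h ha
    · rcases b.2.1 t with h' | h'
      · exact absurd h' hb
      · rw [h, h']
  · refine ⟨⟨fun _ => -1, fun t => Or.inr rfl, ?_, ?_⟩⟩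
    · simp
    · intro T hT
      interval_cases T
      simp

lemma first_step_one {i : ℕ} (s : Fin (0 + 2 * (i+1) + 1) → ℤ)
    (h1 : ∀ t, s t = 1 ∨ s t = -1)
    (h3 : ∀ T : ℕ, T ≤ 0 + 2 * (i+1) →
      0 ≤ ((0:ℕ) : ℤ) + ∑ t ∈ Finset.univ.filter
        (fun t : Fin (0 + 2 * (i+1) + 1) => (t : ℕ) < T), s t) :
    ext' s 0 = 1 := by
  have h := h3 1 (by omega)
  rw [sum_filter_lt s 1 (by omega), Finset.sum_range_one] at h
  rw [ext'] at *
  rw [dif_pos (by omega : 0 < 0 + 2 * (i+1) + 1)] at *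
  rcases h1 ⟨0, by omega⟩ with h' | h'
  · exact h'
  · rw [h'] at h; norm_num at h

lemma pathCount_succ (i : ℕ) : pathCount (i+1) 0 = pathCount i 1 := by
  have h : (1 + 2*i + 1) + 1 = 0 + 2*(i+1) + 1 := by omega
  have hrange : Finset.range (0 + 2*(i+1) + 1) = Finset.range ((1 + 2*i + 1) + 1) :=
    congrArg Finset.range h.symm
  rw [pathCount, pathCount]
  apply Nat.card_congr
  have hg : ∀ (s : Fin (0 + 2*(i+1) + 1) → ℤ) (j : ℕ), j < 1 + 2*i + 1 →
      ext' (fun t : Fin (1 + 2*i + 1) => s (Fin.cast h t.succ)) j = ext' s (j+1) := by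
    intro s j hj
    rw [ext', ext', dif_pos hj, dif_pos (by omega : j + 1 < 0 + 2*(i+1) + 1)]
    congr 1
  have hc0 : ∀ (s : Fin (1 + 2*i + 1) → ℤ),
      ext' (fun t : Fin (0 + 2*(i+1) + 1) =>
        Fin.cons (α := fun _ => ℤ) 1 s (Fin.cast h.symm t)) 0 = 1 := by
    intro s
    rw [ext', dif_pos (by omega : 0 < 0 + 2*(i+1) + 1)]
    have h0 : Fin.cast h.symm (⟨0, by omega⟩ : Fin (0 + 2*(i+1) + 1)) = 0 := by
      apply Fin.ext; simp
    simp only [h0, Fin.cons_zero]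
  have hcS : ∀ (s : Fin (1 + 2*i + 1) → ℤ) (j : ℕ), j < 1 + 2*i + 1 →
      ext' (fun t : Fin (0 + 2*(i+1) + 1) =>
        Fin.cons (α := fun _ => ℤ) 1 s (Fin.cast h.symm t)) (j+1) = ext' s j := by
    intro s j hj
    rw [ext', ext', dif_pos (by omega : j + 1 < 0 + 2*(i+1) + 1), dif_pos hj]
    have hj1 : Fin.cast h.symm (⟨j+1, by omega⟩ : Fin (0 + 2*(i+1) + 1))
        = Fin.succ ⟨j, hj⟩ := by apply Fin.ext; simp
    simp only [hj1, Fin.cons_succ]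
  refine ⟨fun x => ⟨fun t => x.1 (Fin.cast h t.succ), ?_, ?_, ?_⟩,
          fun x => ⟨fun t => Fin.cons (α := fun _ => ℤ) 1 x.1 (Fin.cast h.symm t),
            ?_, ?_, ?_⟩, ?_, ?_⟩
  · exact fun t => x.2.1 _
  · -- card for forward map
    obtain ⟨s, h1, h2, h3⟩ := x
    have hs0 := first_step_one s h1 h3
    rw [card_filter_eq] at h2 ⊢
    rw [hrange, Finset.sum_range_succ', hs0] at h2
    have hcongr : (∑ j ∈ Finset.range (1+2*i+1),
          if ext' (fun t : Fin (1+2*i+1) => s (Fin.cast h t.succ)) j = 1 then (1:ℕ) else 0)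
        = ∑ j ∈ Finset.range (1+2*i+1), if ext' s (j+1) = 1 then (1:ℕ) else 0 :=
      Finset.sum_congr rfl (fun j hj => by rw [hg s j (Finset.mem_range.mp hj)])
    rw [hcongr]
    rw [if_pos rfl] at h2
    omega
  · -- prefix for forward map
    obtain ⟨s, h1, h2, h3⟩ := x
    have hs0 := first_step_one s h1 h3
    intro T hT
    have hh := h3 (T+1) (by omega)
    rw [sum_filter_lt s (T+1) (by omega), Finset.sum_range_succ', hs0] at hh
    rw [sum_filter_lt _ T (by omega)]
    have hcongr : (∑ j ∈ Finset.range T,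
          ext' (fun t : Fin (1+2*i+1) => s (Fin.cast h t.succ)) j)
        = ∑ j ∈ Finset.range T, ext' s (j+1) :=
      Finset.sum_congr rfl (fun j hj => hg s j (by
        have := Finset.mem_range.mp hj; omega))
    rw [hcongr]
    push_cast at hh ⊢
    linarith
  · -- entries ±1 for inverse map
    obtain ⟨s, h1, h2, h3⟩ := x
    intro t
    beta_reduce
    rcases Fin.eq_zero_or_eq_succ (Fin.cast h.symm t) with h0 | ⟨u, hu⟩
    · left; rw [h0, Fin.cons_zero]
    · rw [hu, Fin.cons_succ]; exact h1 u
  · -- card for inverse map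
    obtain ⟨s, h1, h2, h3⟩ := x
    rw [card_filter_eq] at h2 ⊢
    rw [hrange, Finset.sum_range_succ']
    have hcongr : (∑ j ∈ Finset.range (1+2*i+1),
          if ext' (fun t : Fin (0+2*(i+1)+1) =>
            Fin.cons (α := fun _ => ℤ) 1 s (Fin.cast h.symm t)) (j+1) = 1 then (1:ℕ) else 0)
        = ∑ j ∈ Finset.range (1+2*i+1), if ext' s j = 1 then (1:ℕ) else 0 :=
      Finset.sum_congr rfl (fun j hj => by rw [hcS s j (Finset.mem_range.mp hj)])
    rw [hcongr, hc0 s, if_pos rfl]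
    omega
  · -- prefix for inverse map
    obtain ⟨s, h1, h2, h3⟩ := x
    intro T hT
    rw [sum_filter_lt _ T (by omega)]
    cases T with
    | zero => simp
    | succ T' =>
      rw [Finset.sum_range_succ']
      have hcongr : (∑ j ∈ Finset.range T',
            ext' (fun t : Fin (0+2*(i+1)+1) =>
              Fin.cons (α := fun _ => ℤ) 1 s (Fin.cast h.symm t)) (j+1))
          = ∑ j ∈ Finset.range T', ext' s j :=
        Finset.sum_congr rfl (fun j hj => hcS s j (by
          have := Finset.mem_range.mp hj; omega))
      rw [hcongr, hc0 s]
      have hh := h3 T' (by omega)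
      rw [sum_filter_lt s T' (by omega)] at hh
      push_cast at hh ⊢
      linarith
  · -- left inverse
    rintro ⟨s, h1, h2, h3⟩
    apply Subtype.ext
    funext t
    simp only
    rcases Fin.eq_zero_or_eq_succ (Fin.cast h.symm t) with h0 | ⟨u, hu⟩
    · rw [h0, Fin.cons_zero]
      have ht : t = ⟨0, by omega⟩ := by
        apply Fin.ext
        have hv : ((Fin.cast h.symm t : Fin ((1+2*i+1)+1)) : ℕ) = 0 := by rw [h0]; rfl
        simpa using hv
      have hs0 := first_step_one s h1 h3
      rw [ext', dif_pos (by omega : 0 < 0 + 2*(i+1) + 1)] at hs0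
      rw [ht, hs0]
    · rw [hu, Fin.cons_succ]
      congr 1
      apply Fin.ext
      have hv : ((Fin.cast h.symm t : Fin ((1+2*i+1)+1)) : ℕ) = (u.succ : ℕ) := by rw [hu]
      simp at hv
      simp [hv]
  · -- right inverse
    rintro ⟨s, h1, h2, h3⟩
    apply Subtype.ext
    funext t
    simp only
    have hv : Fin.cast h.symm (Fin.cast h t.succ) = t.succ := by apply Fin.ext; simp
    rw [hv, Fin.cons_succ]


/-- For every real `I` and all integers `0 ≤ n < l`, `F_I(l,0,n) = I + (1-I)·F_I(l,1,n+1)`: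
the random-walk recursion at the boundary `m = 0`, with the convention that the hitting
probability from lag `-1` equals `1`. -/
theorem F_recursion_boundary (I : ℝ) (l n : ℕ) (hnl : n < l) :
    F I l 0 n = I + (1 - I) * F I l 1 (n + 1) := by
  rw [F, F, Finset.mul_sum]
  have hk : l - n = (l - (n+1)) + 1 := by omega
  rw [hk, Finset.sum_range_succ', pathCount_zero_zero, add_comm]
  congr 1
  · norm_num
  · exact Finset.sum_congr rfl fun j _ => by rw [pathCount_succ]; ring
end

section
/- For every real number I with 0 ≤ I < 1 and every integer m ≥ 0, the family i ↦ a(i,m)·(1−I)^i·I^{m+1+i} is summable, and its sum ∑_{i=0}^{∞} a(i,m)·(1−I)^i·I^{m+1+i} equals (I/(1−I))^{m+1} if 0 ≤ I < 1/2 and equals 1 if 1/2 ≤ I < 1. Equivalently, for each fixed n ≥ 0 and m ≥ 0, F_I(l,m,n) converges as l → ∞ to (I/(1−I))^{m+1} when 0 ≤ I < 1/2 and to 1 when 1/2 ≤ I < 1. -/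
namespace FAux

open Finset

def psum {n : ℕ} (s : Fin n → ℤ) (T : ℕ) : ℤ :=
  ∑ t ∈ Finset.univ.filter (fun t : Fin n => (t : ℕ) < T), s t

def ones {n : ℕ} (s : Fin n → ℤ) : ℕ :=
  (Finset.univ.filter fun t => s t = 1).card

def Cond (m i n : ℕ) (s : Fin n → ℤ) : Prop :=
  (∀ t, s t = 1 ∨ s t = -1) ∧ ones s = i ∧
  ∀ T : ℕ, T ≤ n - 1 → 0 ≤ (m : ℤ) + psum s T

lemma pathCount_eq (i m : ℕ) :
    pathCount i m = Nat.card {s : Fin (m + 2 * i + 1) → ℤ // Cond m i (m + 2 * i + 1) s} := rfl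

lemma psum_zero {n : ℕ} (s : Fin n → ℤ) : psum s 0 = 0 := by
  simp [psum]

lemma psum_succ {n : ℕ} (s : Fin (n + 1) → ℤ) (T : ℕ) :
    psum s (T + 1) = s 0 + psum (Fin.tail s) T := by
  unfold psum
  rw [Finset.sum_filter, Fin.sum_univ_succ, Finset.sum_filter]
  simp [Fin.tail, Nat.succ_lt_succ_iff]

lemma ones_succ {n : ℕ} (s : Fin (n + 1) → ℤ) :
    ones s = (if s 0 = 1 then 1 else 0) + ones (Fin.tail s) := by
  unfold ones
  rw [Finset.card_filter, Fin.sum_univ_succ, Finset.card_filter]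
  simp [Fin.tail]
  rw [Finset.card_filter]
  congr

instance condFinite (m i n : ℕ) : Finite {s : Fin n → ℤ // Cond m i n s} := by
  apply Finite.of_injective (fun s => (fun t => decide (s.1 t = 1) : Fin n → Bool))
  rintro ⟨s, hs⟩ ⟨s', hs'⟩ h
  ext t
  have ht := congrFun h t
  simp only [decide_eq_decide] at ht
  rcases hs.1 t with h1 | h1 <;> rcases hs'.1 t with h2 | h2 <;> simp [h1, h2] at ht ⊢ <;> omega

lemma cond_up {n m i : ℕ} (hn : 1 ≤ n) (s : Fin (n + 1) → ℤ) (h0 : s 0 = 1) :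
    Cond m (i + 1) (n + 1) s ↔ Cond (m + 1) i n (Fin.tail s) := by
  constructor
  · rintro ⟨ha, hb, hc⟩
    refine ⟨fun t => ha t.succ, ?_, fun T hT => ?_⟩
    · rw [ones_succ, if_pos h0] at hb; omega
    · have := hc (T + 1) (by omega)
      rw [psum_succ, h0] at this
      push_cast
      push_cast at this
      linarith
  · rintro ⟨ha, hb, hc⟩
    refine ⟨fun t => ?_, ?_, fun T hT => ?_⟩
    · rcases Fin.eq_zero_or_eq_succ t with h | ⟨j, rfl⟩
      · exact Or.inl (h ▸ h0)
      · exact ha j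
    · rw [ones_succ, if_pos h0, hb]; omega
    · rcases T with _ | T
      · rw [psum_zero]; positivity
      · have := hc T (by omega)
        rw [psum_succ, h0]
        push_cast at this ⊢
        linarith

lemma cond_down {n m i : ℕ} (hn : 1 ≤ n) (s : Fin (n + 1) → ℤ) (h0 : s 0 = -1) :
    Cond (m + 1) i (n + 1) s ↔ Cond m i n (Fin.tail s) := by
  constructor
  · rintro ⟨ha, hb, hc⟩
    refine ⟨fun t => ha t.succ, ?_, fun T hT => ?_⟩
    · rw [ones_succ, if_neg (by rw [h0]; norm_num)] at hb; omega
    · have := hc (T + 1) (by omega)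
      rw [psum_succ, h0] at this
      push_cast at this ⊢
      linarith
  · rintro ⟨ha, hb, hc⟩
    refine ⟨fun t => ?_, ?_, fun T hT => ?_⟩
    · rcases Fin.eq_zero_or_eq_succ t with h | ⟨j, rfl⟩
      · exact Or.inr (h ▸ h0)
      · exact ha j
    · rw [ones_succ, if_neg (by rw [h0]; norm_num), hb]; omega
    · rcases T with _ | T
      · rw [psum_zero]; positivity
      · have := hc T (by omega)
        rw [psum_succ, h0]
        push_cast at this ⊢
        linarith

lemma head_one {n i : ℕ} (hn : 1 ≤ n) (s : Fin (n + 1) → ℤ)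
    (h : Cond 0 i (n + 1) s) : s 0 = 1 := by
  rcases h.1 0 with h0 | h0
  · exact h0
  · exfalso
    have := h.2.2 1 (by omega)
    rw [psum_succ, psum_zero, h0] at this
    norm_num at this

lemma card_cast (m i : ℕ) {n n' : ℕ} (hn : n = n') :
    Nat.card {s : Fin n → ℤ // Cond m i n s} = Nat.card {s : Fin n' → ℤ // Cond m i n' s} := by
  subst hn; rfl

/-- `a(i+1, 0) = a(i, 1)` -/
lemma rec_zero (i : ℕ) : pathCount (i + 1) 0 = pathCount i 1 := by
  rw [pathCount_eq, pathCount_eq,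
    card_cast 0 (i + 1) (show 0 + 2 * (i + 1) + 1 = (2 * i + 2) + 1 by omega),
    card_cast 1 i (show 1 + 2 * i + 1 = 2 * i + 2 by omega)]
  apply Nat.card_congr
  refine ⟨fun s => ⟨Fin.tail s.1, (cond_up (by omega) s.1 (head_one (by omega) s.1 s.2)).mp s.2⟩,
    fun t => ⟨Fin.cons 1 t.1, (cond_up (by omega) _ (by simp)).mpr (by simpa [Fin.tail_cons] using t.2)⟩,
    fun s => ?_, fun t => ?_⟩
  · apply Subtype.ext
    simp only
    rw [← head_one (by omega) s.1 s.2, Fin.cons_self_tail]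
  · apply Subtype.ext
    simp [Fin.tail_cons]

/-- `a(i+1, m+1) = a(i, m+2) + a(i+1, m)` -/
lemma rec_succ (i m : ℕ) :
    pathCount (i + 1) (m + 1) = pathCount i (m + 2) + pathCount (i + 1) m := by
  rw [pathCount_eq, pathCount_eq, pathCount_eq,
    card_cast (m + 1) (i + 1) (show (m + 1) + 2 * (i + 1) + 1 = (m + 2 * i + 3) + 1 by omega),
    card_cast (m + 2) i (show (m + 2) + 2 * i + 1 = m + 2 * i + 3 by omega),
    card_cast m (i + 1) (show m + 2 * (i + 1) + 1 = m + 2 * i + 3 by omega)]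
  set K := m + 2 * i + 3 with hK
  have hK1 : 1 ≤ K := by omega
  rw [← Nat.card_sum]
  apply Nat.card_congr
  refine ⟨fun s => if h : s.1 0 = 1 then
      Sum.inl ⟨Fin.tail s.1, (cond_up hK1 s.1 h).mp s.2⟩
    else
      Sum.inr ⟨Fin.tail s.1, (cond_down hK1 s.1 (by rcases s.2.1 0 with h1 | h1; exact absurd h1 h; exact h1)).mp s.2⟩,
    fun t => match t with
      | Sum.inl t => ⟨Fin.cons 1 t.1, (cond_up hK1 _ (by simp)).mpr (by simpa [Fin.tail_cons] using t.2)⟩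
      | Sum.inr t => ⟨Fin.cons (-1) t.1, (cond_down hK1 _ (by simp)).mpr (by simpa [Fin.tail_cons] using t.2)⟩,
    fun s => ?_, fun t => ?_⟩
  · dsimp only
    by_cases h : s.1 0 = 1
    · rw [dif_pos h]
      apply Subtype.ext
      show Fin.cons 1 (Fin.tail s.1) = s.1
      rw [← h, Fin.cons_self_tail]
    · rw [dif_neg h]
      apply Subtype.ext
      show Fin.cons (-1) (Fin.tail s.1) = s.1
      have h1 : s.1 0 = -1 := by rcases s.2.1 0 with h1 | h1; exact absurd h1 h; exact h1
      rw [← h1, Fin.cons_self_tail]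
  · rcases t with t | t
    · dsimp only
      rw [dif_pos (by simp)]
      exact congrArg Sum.inl (Subtype.ext (by simp))
    · dsimp only
      rw [dif_neg (by norm_num)]
      exact congrArg Sum.inr (Subtype.ext (by simp))

lemma card_filter_lt_le {n : ℕ} (T : ℕ) :
    (Finset.univ.filter (fun t : Fin n => (t : ℕ) < T)).card ≤ T := by
  classical
  calc (Finset.univ.filter (fun t : Fin n => (t : ℕ) < T)).card
      ≤ (Finset.range T).card := by
        refine Finset.card_le_card_of_injOn (fun t => (t : ℕ)) (fun t ht => ?_) ?_
        · simp only [Finset.mem_coe, Finset.mem_filter] at ht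
          exact Finset.mem_range.mpr ht.2
        · intro a _ b _ h
          exact Fin.ext h
    _ = T := Finset.card_range T

/-- `a(0, m) = 1` -/
lemma rec_base (m : ℕ) : pathCount 0 m = 1 := by
  rw [pathCount_eq]
  rw [Nat.card_eq_one_iff_unique]
  constructor
  · constructor
    rintro ⟨s, hs⟩ ⟨s', hs'⟩
    apply Subtype.ext
    funext t
    have h1 : s t = -1 := by
      rcases hs.1 t with h | h
      · exfalso
        have : t ∈ Finset.univ.filter (fun t => s t = 1) := by simp [h]
        have hp := Finset.card_pos.mpr ⟨t, this⟩
        have h0 : (Finset.univ.filter fun u => s u = 1).card = 0 := hs.2.1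
        omega
      · exact h
    have h2 : s' t = -1 := by
      rcases hs'.1 t with h | h
      · exfalso
        have : t ∈ Finset.univ.filter (fun t => s' t = 1) := by simp [h]
        have hp := Finset.card_pos.mpr ⟨t, this⟩
        have h0 : (Finset.univ.filter fun u => s' u = 1).card = 0 := hs'.2.1
        omega
      · exact h
    show s t = s' t
    rw [h1, h2]
  · refine ⟨⟨fun _ => -1, fun t => Or.inr rfl, ?_, fun T hT => ?_⟩⟩
    · simp [ones]
    · unfold psum
      rw [Finset.sum_const]
      have hc := card_filter_lt_le (n := m + 2 * 0 + 1) T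
      have hT' : T ≤ m := by omega
      have : ((Finset.univ.filter (fun t : Fin (m + 2 * 0 + 1) => (t : ℕ) < T)).card : ℤ) ≤ m := by
        exact_mod_cast le_trans hc hT'
      simp only [nsmul_eq_mul, mul_neg, mul_one]
      linarith

end FAux

namespace FAux

noncomputable def term (I : ℝ) (m i : ℕ) : ℝ :=
  (pathCount i m : ℝ) * (1 - I) ^ i * I ^ (m + 1 + i)

noncomputable def S (I : ℝ) (N m : ℕ) : ℝ := ∑ i ∈ Finset.range N, term I m i

noncomputable def r (I : ℝ) : ℝ := if I < 1 / 2 then I / (1 - I) else 1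

section Analysis

variable {I : ℝ} (hI0 : 0 ≤ I) (hI1 : I < 1)

lemma hx (h : I < 1) : (0 : ℝ) < 1 - I := by linarith

include hI0 hI1

lemma r_nonneg : 0 ≤ r I := by
  unfold r; split_ifs
  · exact div_nonneg hI0 (le_of_lt (hx hI1))
  · norm_num

lemma r_le_one : r I ≤ 1 := by
  unfold r; split_ifs with h
  · rw [div_le_one (hx hI1)]; linarith
  · exact le_rfl

lemma r_eq : I + (1 - I) * r I ^ 2 = r I := by
  have hne : (1 - I) ≠ 0 := ne_of_gt (hx hI1)
  unfold r; split_ifs with h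
  · field_simp
    ring
  · ring

omit hI0 hI1

lemma term_zero (m : ℕ) : term I m 0 = I ^ (m + 1) := by
  unfold term
  rw [rec_base]
  norm_num

lemma term_base (i : ℕ) : term I 0 (i + 1) = (1 - I) * term I 1 i := by
  unfold term
  rw [rec_zero]
  ring

lemma term_step (m i : ℕ) :
    term I (m + 1) (i + 1) = (1 - I) * term I (m + 2) i + I * term I m (i + 1) := by
  unfold term
  rw [rec_succ]
  push_cast
  ring

lemma S_base (N : ℕ) : S I (N + 1) 0 = I + (1 - I) * S I N 1 := by
  unfold S
  rw [Finset.sum_range_succ', Finset.mul_sum]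
  simp only [term_base, term_zero]
  ring

lemma S_step (N m : ℕ) :
    S I (N + 1) (m + 1) = (1 - I) * S I N (m + 2) + I * S I (N + 1) m := by
  have h1 : S I (N + 1) (m + 1) = (∑ i ∈ Finset.range N, term I (m + 1) (i + 1)) + term I (m + 1) 0 :=
    Finset.sum_range_succ' _ _
  have h2 : S I (N + 1) m = (∑ i ∈ Finset.range N, term I m (i + 1)) + term I m 0 :=
    Finset.sum_range_succ' _ _
  rw [h1, h2, term_zero, term_zero]
  simp only [term_step]
  rw [Finset.sum_add_distrib, ← Finset.mul_sum, ← Finset.mul_sum]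
  unfold S
  ring

include hI0 hI1

lemma term_nonneg (m i : ℕ) : 0 ≤ term I m i := by
  unfold term
  have h1 : (0:ℝ) ≤ 1 - I := by linarith
  exact mul_nonneg (mul_nonneg (Nat.cast_nonneg _) (pow_nonneg h1 i)) (pow_nonneg hI0 _)

lemma S_le (N m : ℕ) : S I N m ≤ r I ^ (m + 1) := by
  induction N generalizing m with
  | zero => simpa [S] using pow_nonneg (r_nonneg hI0 hI1) (m + 1)
  | succ N ihN =>
    induction m with
    | zero =>
      rw [S_base, pow_one]
      have h1 := ihN 1
      have hr := r_eq hI0 hI1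
      have hxx := hx hI1
      have h2 : (1 - I) * S I N 1 ≤ (1 - I) * r I ^ 2 := by
        have h3 : r I ^ (1 + 1) = r I ^ 2 := by norm_num
        rw [h3] at h1
        exact mul_le_mul_of_nonneg_left h1 hxx.le
      linarith
    | succ m ihm =>
      rw [S_step, show m + 1 + 1 = m + 2 from by omega]
      have h1 := ihN (m + 2)
      rw [show m + 2 + 1 = m + 3 from by omega] at h1
      have hxx := hx hI1
      have key : (1 - I) * r I ^ (m + 3) + I * r I ^ (m + 1) = r I ^ (m + 2) := by
        linear_combination (r I ^ (m + 1)) * (r_eq hI0 hI1)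
      have a1 : (1 - I) * S I N (m + 2) ≤ (1 - I) * r I ^ (m + 3) :=
        mul_le_mul_of_nonneg_left h1 hxx.le
      have a2 : I * S I (N + 1) m ≤ I * r I ^ (m + 1) :=
        mul_le_mul_of_nonneg_left ihm hI0
      linarith

lemma summable_term (m : ℕ) : Summable (fun i => term I m i) := by
  apply summable_of_sum_range_le (c := r I ^ (m + 1)) (fun i => term_nonneg hI0 hI1 m i)
  intro n
  exact S_le hI0 hI1 n m

noncomputable def f (I : ℝ) (m : ℕ) : ℝ := ∑' i, term I m i

lemma S_tendsto (m : ℕ) :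
    Filter.Tendsto (fun N => S I N m) Filter.atTop (nhds (f I m)) :=
  (summable_term hI0 hI1 m).hasSum.tendsto_sum_nat

lemma f_base : f I 0 = I + (1 - I) * f I 1 := by
  have h1 : Filter.Tendsto (fun N => S I (N + 1) 0) Filter.atTop (nhds (f I 0)) :=
    (S_tendsto hI0 hI1 0).comp (Filter.tendsto_add_atTop_nat 1)
  have h2 : Filter.Tendsto (fun N => I + (1 - I) * S I N 1) Filter.atTop
      (nhds (I + (1 - I) * f I 1)) :=
    (tendsto_const_nhds.add (tendsto_const_nhds.mul (S_tendsto hI0 hI1 1)))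
  refine tendsto_nhds_unique ?_ h2
  simpa only [S_base] using h1

lemma f_step (m : ℕ) : f I (m + 1) = (1 - I) * f I (m + 2) + I * f I m := by
  have h1 : Filter.Tendsto (fun N => S I (N + 1) (m + 1)) Filter.atTop (nhds (f I (m + 1))) :=
    (S_tendsto hI0 hI1 (m + 1)).comp (Filter.tendsto_add_atTop_nat 1)
  have h2 : Filter.Tendsto (fun N => (1 - I) * S I N (m + 2) + I * S I (N + 1) m) Filter.atTop
      (nhds ((1 - I) * f I (m + 2) + I * f I m)) := by
    refine (tendsto_const_nhds.mul (S_tendsto hI0 hI1 (m + 2))).add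
      (tendsto_const_nhds.mul ?_)
    exact (S_tendsto hI0 hI1 m).comp (Filter.tendsto_add_atTop_nat 1)
  refine tendsto_nhds_unique ?_ h2
  simpa only [S_step] using h1

lemma f_nonneg (m : ℕ) : 0 ≤ f I m :=
  tsum_nonneg (fun i => term_nonneg hI0 hI1 m i)

lemma f_le (m : ℕ) : f I m ≤ r I ^ (m + 1) :=
  le_of_tendsto' (S_tendsto hI0 hI1 m) (fun N => S_le hI0 hI1 N m)

noncomputable def G (I : ℝ) (m : ℕ) : ℝ := ∑ k ∈ Finset.range (m + 1), (I / (1 - I)) ^ k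

lemma G_identity (m : ℕ) : (1 - I) * G I (m + 2) + I * G I m = G I (m + 1) := by
  have hxx := hx hI1
  have hne : (1 - I) ≠ 0 := ne_of_gt hxx
  have hq : (1 - I) * (I / (1 - I)) = I := by field_simp
  unfold G
  rw [Finset.sum_range_succ, Finset.sum_range_succ (n := m + 1)]
  have : (1 - I) * (I / (1 - I)) ^ (m + 2) = I * (I / (1 - I)) ^ (m + 1) := by
    rw [pow_succ (n := m + 1)]
    calc (1 - I) * ((I / (1 - I)) ^ (m + 1) * (I / (1 - I)))
        = ((1 - I) * (I / (1 - I))) * (I / (1 - I)) ^ (m + 1) := by ring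
      _ = I * (I / (1 - I)) ^ (m + 1) := by rw [hq]
  ring_nf
  ring_nf at this
  linarith

noncomputable def h (I : ℝ) (m : ℕ) : ℝ := r I ^ (m + 1) - f I m

lemma h_nonneg (m : ℕ) : 0 ≤ h I m := by
  unfold h; linarith [f_le hI0 hI1 m]

lemma h_le (m : ℕ) : h I m ≤ r I ^ (m + 1) := by
  unfold h; linarith [f_nonneg hI0 hI1 m]

lemma h_base : h I 0 = (1 - I) * h I 1 := by
  unfold h
  have h1 := f_base hI0 hI1
  have hr := r_eq hI0 hI1
  linear_combination -hr - h1

lemma h_step (m : ℕ) : h I (m + 1) = (1 - I) * h I (m + 2) + I * h I m := by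
  unfold h
  have h1 := f_step hI0 hI1 m
  have key : (1 - I) * r I ^ (m + 3) + I * r I ^ (m + 1) = r I ^ (m + 2) := by
    linear_combination (r I ^ (m + 1)) * (r_eq hI0 hI1)
  linear_combination -key - h1

lemma h_closed (m : ℕ) : h I m = h I 0 * G I m := by
  induction m using Nat.strong_induction_on with
  | _ m ih =>
    rcases m with _ | (_ | k)
    · simp [G]
    · have hb := h_base hI0 hI1
      have hne : (1 - I) ≠ 0 := ne_of_gt (hx hI1)
      have hG : G I 1 = 1 + I / (1 - I) := by simp [G, Finset.sum_range_succ]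
      apply mul_left_cancel₀ hne
      rw [← hb, hG]
      field_simp
      ring
    · have hk := ih k (by omega)
      have hk1 := ih (k + 1) (by omega)
      have hs := h_step hI0 hI1 k
      have hGid := G_identity hI0 hI1 k
      have hne : (1 - I) ≠ 0 := ne_of_gt (hx hI1)
      apply mul_left_cancel₀ hne
      linear_combination -hs + hk1 - I * hk - (h I 0) * hGid

lemma G_ge_one (m : ℕ) : 1 ≤ G I m := by
  have hq : (0 : ℝ) ≤ I / (1 - I) := div_nonneg hI0 (hx hI1).le
  have h0 : (I / (1 - I)) ^ 0 = 1 := pow_zero _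
  calc (1 : ℝ) = (I / (1 - I)) ^ 0 := h0.symm
    _ ≤ G I m := Finset.single_le_sum (fun k _ => pow_nonneg hq k)
        (Finset.mem_range.mpr (by omega))

lemma h_zero : h I 0 = 0 := by
  have hle0 : h I 0 ≤ 0 := by
    by_cases hc : I < 1 / 2
    · have hrq : r I = I / (1 - I) := if_pos hc
      have hq0 : 0 ≤ r I := r_nonneg hI0 hI1
      have hq1 : r I < 1 := by
        rw [hrq, div_lt_one (hx hI1)]; linarith
      have htend : Filter.Tendsto (fun m : ℕ => r I ^ (m + 1)) Filter.atTop (nhds 0) :=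
        (tendsto_pow_atTop_nhds_zero_of_lt_one hq0 hq1).comp (Filter.tendsto_add_atTop_nat 1)
      refine ge_of_tendsto' htend (fun m => ?_)
      calc h I 0 = h I 0 * 1 := (mul_one _).symm
        _ ≤ h I 0 * G I m := mul_le_mul_of_nonneg_left (G_ge_one hI0 hI1 m) (h_nonneg hI0 hI1 0)
        _ = h I m := (h_closed hI0 hI1 m).symm
        _ ≤ r I ^ (m + 1) := h_le hI0 hI1 m
    · have hq1 : (1 : ℝ) ≤ I / (1 - I) := by
        rw [le_div_iff₀ (hx hI1)]; push_neg at hc; linarith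
      have hr1 : r I = 1 := if_neg hc
      have hGm : ∀ m : ℕ, ((m : ℝ) + 1) ≤ G I m := by
        intro m
        unfold G
        calc ((m : ℝ) + 1) = ∑ _k ∈ Finset.range (m + 1), (1 : ℝ) := by simp
          _ ≤ ∑ k ∈ Finset.range (m + 1), (I / (1 - I)) ^ k :=
            Finset.sum_le_sum (fun k _ => one_le_pow₀ hq1)
      have htend : Filter.Tendsto (fun m : ℕ => 1 / ((m : ℝ) + 1)) Filter.atTop (nhds 0) :=
        tendsto_one_div_add_atTop_nhds_zero_nat
      refine ge_of_tendsto' htend (fun m => ?_)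
      rw [le_div_iff₀ (by positivity)]
      have h2 : h I 0 * ((m : ℝ) + 1) ≤ h I 0 * G I m :=
        mul_le_mul_of_nonneg_left (hGm m) (h_nonneg hI0 hI1 0)
      have h3 : h I m ≤ 1 := by
        have := h_le hI0 hI1 m
        rwa [hr1, one_pow] at this
      rw [← h_closed hI0 hI1 m] at h2
      linarith
  linarith [h_nonneg hI0 hI1 0]

lemma f_eq (m : ℕ) : f I m = r I ^ (m + 1) := by
  have h1 := h_closed hI0 hI1 m
  rw [h_zero hI0 hI1, zero_mul] at h1
  unfold h at h1
  linarith

end Analysis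

end FAux

/-- For `0 ≤ I < 1` and `m ≥ 0`, the family `i ↦ a(i,m)(1-I)^i I^(m+1+i)` is summable with
sum `(I/(1-I))^(m+1)` if `I < 1/2` and `1` if `1/2 ≤ I < 1`; equivalently, for each fixed
`n`, `F_I(l,m,n)` converges to that value as `l → ∞`. -/
theorem F_limit (I : ℝ) (hI0 : 0 ≤ I) (hI1 : I < 1) (m : ℕ) :
    Summable (fun i : ℕ => (pathCount i m : ℝ) * (1 - I) ^ i * I ^ (m + 1 + i)) ∧
    (∑' i : ℕ, (pathCount i m : ℝ) * (1 - I) ^ i * I ^ (m + 1 + i)) =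
      (if I < 1 / 2 then (I / (1 - I)) ^ (m + 1) else 1) ∧
    ∀ n : ℕ, Filter.Tendsto (fun l : ℕ => F I l m n) Filter.atTop
      (nhds (if I < 1 / 2 then (I / (1 - I)) ^ (m + 1) else 1)) := by
  have hval : FAux.f I m = (if I < 1 / 2 then (I / (1 - I)) ^ (m + 1) else 1) := by
    rw [FAux.f_eq hI0 hI1 m]
    unfold FAux.r
    split_ifs
    · rfl
    · exact one_pow _
  refine ⟨FAux.summable_term hI0 hI1 m, ?_, ?_⟩
  · rw [← hval]; rfl
  · intro n
    rw [← hval]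
    exact (FAux.S_tendsto hI0 hI1 m).comp (Filter.tendsto_sub_atTop_nat n)
end

section
/- For every real number I with 0 < I < 1, the family i ↦ C_i·(I·(1−I))^i is summable and ∑_{i=0}^{∞} C_i·(I·(1−I))^i = 1/(1−I) if 0 < I < 1/2 and = 1/I if 1/2 ≤ I < 1 (equivalently, the sum equals 1/max(I, 1−I)). -/
open Finset

lemma catalan_telescope (n : ℕ) :
    ∑ i ∈ Finset.range n, (catalan i : ℝ) / 4 ^ i
      = 2 - 2 * (Nat.centralBinom n : ℝ) / 4 ^ n := by
  induction n with
  | zero => simp [Nat.centralBinom]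
  | succ n ih =>
    rw [Finset.sum_range_succ, ih]
    have h1 : ((n : ℝ) + 1) * (catalan n : ℝ) = (Nat.centralBinom n : ℝ) := by
      exact_mod_cast congrArg (Nat.cast : ℕ → ℝ) (succ_mul_catalan_eq_centralBinom n)
    have h2 : ((n : ℝ) + 1) * (Nat.centralBinom (n + 1) : ℝ)
        = 2 * (2 * n + 1) * (Nat.centralBinom n : ℝ) := by
      exact_mod_cast congrArg (Nat.cast : ℕ → ℝ) (Nat.succ_mul_centralBinom_succ n)
    have h4 : (4 : ℝ) ^ n ≠ 0 := by positivity
    have hn1 : ((n : ℝ) + 1) ≠ 0 := by positivity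
    field_simp [pow_succ]
    have e1 : (catalan n : ℝ) = (Nat.centralBinom n : ℝ) / ((n:ℝ)+1) := by
      rw [← h1]; field_simp
    have e2 : (Nat.centralBinom (n+1) : ℝ) = 2 * (2 * n + 1) * (Nat.centralBinom n : ℝ) / ((n:ℝ)+1) := by
      rw [← h2]; field_simp
    rw [e1, e2]; field_simp; ring

lemma catalan_partial_le {x : ℝ} (hx0 : 0 ≤ x) (hx : x ≤ 1 / 4) (n : ℕ) :
    ∑ i ∈ Finset.range n, (catalan i : ℝ) * x ^ i ≤ 2 := by
  have h1 : ∑ i ∈ Finset.range n, (catalan i : ℝ) * x ^ i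
      ≤ ∑ i ∈ Finset.range n, (catalan i : ℝ) / 4 ^ i := by
    apply Finset.sum_le_sum
    intro i _
    have : x ^ i ≤ (1 / 4) ^ i := pow_le_pow_left₀ hx0 hx i
    have hc : (0 : ℝ) ≤ (catalan i : ℝ) := Nat.cast_nonneg _
    calc (catalan i : ℝ) * x ^ i ≤ (catalan i : ℝ) * (1 / 4) ^ i := by nlinarith
      _ = (catalan i : ℝ) / 4 ^ i := by rw [div_pow, one_pow]; ring
  rw [catalan_telescope n] at h1
  have : (0 : ℝ) ≤ 2 * (Nat.centralBinom n : ℝ) / 4 ^ n := by positivity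
  linarith

/-- For `0 < I < 1`, the family `i ↦ C_i·(I(1-I))^i` (with `C_i` the `i`-th Catalan number)
is summable and its sum equals `1/(1-I)` if `0 < I < 1/2` and `1/I` if `1/2 ≤ I < 1`. -/
theorem catalan_generating_sum (I : ℝ) (hI0 : 0 < I) (hI1 : I < 1) :
    Summable (fun i : ℕ => (catalan i : ℝ) * (I * (1 - I)) ^ i) ∧
    (∑' i : ℕ, (catalan i : ℝ) * (I * (1 - I)) ^ i) =
      (if I < 1 / 2 then 1 / (1 - I) else 1 / I) := by
  set x : ℝ := I * (1 - I) with hxdef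
  have hx0 : 0 < x := mul_pos hI0 (by linarith)
  have hx14 : x ≤ 1 / 4 := by nlinarith [sq_nonneg (1 - 2 * I)]
  have hterm : ∀ i : ℕ, 0 ≤ (catalan i : ℝ) * x ^ i := fun i => by positivity
  have hsum : Summable (fun i : ℕ => (catalan i : ℝ) * x ^ i) :=
    summable_of_sum_range_le hterm (catalan_partial_le hx0.le hx14)
  refine ⟨hsum, ?_⟩
  set S : ℝ := ∑' i : ℕ, (catalan i : ℝ) * x ^ i with hSdef
  have hS2 : S ≤ 2 := Summable.tsum_le_of_sum_range_le hsum (catalan_partial_le hx0.le hx14)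
  have hnorm : Summable (fun i : ℕ => ‖(catalan i : ℝ) * x ^ i‖) :=
    hsum.congr fun i => ((abs_of_nonneg (hterm i)).symm.trans (Real.norm_eq_abs _).symm)
  -- Cauchy product
  have hcauchy : S * S = ∑' n : ℕ, (catalan (n + 1) : ℝ) * x ^ n := by
    rw [hSdef, tsum_mul_tsum_eq_tsum_sum_antidiagonal_of_summable_norm hnorm hnorm]
    congr 1
    funext n
    have : ∑ kl ∈ Finset.HasAntidiagonal.antidiagonal n,
        ((catalan kl.1 : ℝ) * x ^ kl.1) * ((catalan kl.2 : ℝ) * x ^ kl.2)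
        = ∑ kl ∈ Finset.HasAntidiagonal.antidiagonal n, ((catalan kl.1 : ℝ) * (catalan kl.2 : ℝ)) * x ^ n := by
      apply Finset.sum_congr rfl
      intro kl hkl
      rw [Finset.HasAntidiagonal.mem_antidiagonal] at hkl
      rw [← hkl, pow_add]
      ring
    rw [this, ← Finset.sum_mul, catalan_succ' n]
    push_cast
    ring
  have hquad : x * S ^ 2 = S - 1 := by
    have hshift : S = 1 + ∑' n : ℕ, (catalan (n + 1) : ℝ) * x ^ (n + 1) := by
      rw [hSdef, Summable.tsum_eq_zero_add hsum]
      simp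
    have : x * (S * S) = ∑' n : ℕ, (catalan (n + 1) : ℝ) * x ^ (n + 1) := by
      rw [hcauchy, ← tsum_mul_left]
      congr 1; funext n; rw [pow_succ]; ring
    nlinarith [hshift, this]
  -- Solve the quadratic
  have h1I : (0 : ℝ) < 1 - I := by linarith
  by_cases hI : I < 1 / 2
  · rw [if_pos hI]
    set T : ℝ := 1 / (1 - I) with hT
    have hTquad : x * T ^ 2 = T - 1 := by
      rw [hT, hxdef]; field_simp; ring
    have hfac : (S - T) * (x * (S + T) - 1) = 0 := by nlinarith
    rcases mul_eq_zero.mp hfac with h | h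
    · linarith
    · exfalso
      have hxT : x * T = I := by rw [hT, hxdef]; field_simp
      have hxS : x * S = 1 - I := by linear_combination h - hxT
      rw [hxdef] at hxS
      have hfac2 : (1 - I) * (I * S - 1) = 0 := by linear_combination hxS
      have hSI : I * S = 1 := by
        rcases mul_eq_zero.mp hfac2 with h' | h'
        · linarith
        · linarith
      nlinarith
  · rw [if_neg hI]
    push_neg at hI
    set T : ℝ := 1 / I with hT
    have hTquad : x * T ^ 2 = T - 1 := by
      rw [hT, hxdef]; field_simp
    have hfac : (S - T) * (x * (S + T) - 1) = 0 := by nlinarith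
    rcases mul_eq_zero.mp hfac with h | h
    · linarith
    · have hxT : x * T = 1 - I := by rw [hT, hxdef]; field_simp
      have hxS : x * S = I := by linear_combination h - hxT
      rw [hxdef] at hxS
      have hfac2 : I * ((1 - I) * S - 1) = 0 := by linear_combination hxS
      have hSI : (1 - I) * S = 1 := by
        rcases mul_eq_zero.mp hfac2 with h' | h'
        · linarith
        · linarith
      rcases eq_or_lt_of_le hI with heq | hlt
      · have hI2 : I = 1 / 2 := heq.symm
        rw [hT, hI2]
        rw [hI2] at hSI
        norm_num at hSI ⊢
        linarith
      · exfalso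
        nlinarith
end

section
/- If 0 < I < 1, then for every nonnegative integer Z, the success probability of a time-restricted double-spending attack is strictly increasing in the time restriction: P_TR(I,Z,L+1) > P_TR(I,Z,L) for every nonnegative integer L. -/
/-- Success probability of a time-restricted double-spending attack with `Z` confirmation
blocks and time restriction of `L` honest blocks after confirmation. -/
noncomputable def P_TR (I : ℝ) (Z L : ℕ) : ℝ :=
  1 - ∑ k ∈ Finset.range (Z + 2),
    (Nat.choose (k + Z) k : ℝ) * I ^ k * (1 - I) ^ (Z + 1) *
      (1 - ∑ i ∈ Finset.range L,
        (pathCount i (Z + 1 - k) : ℝ) * (1 - I) ^ i * I ^ (Z + 2 - k + i))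

lemma card_filter_val_lt (n a : ℕ) (h : a < n) :
    (Finset.univ.filter fun t : Fin n => (t : ℕ) < a).card = a := by
  have : (Finset.univ.filter fun t : Fin n => (t : ℕ) < a) = Finset.Iio ⟨a, h⟩ := by
    ext t; simp [Fin.lt_def]
  rw [this, Fin.card_Iio]

lemma pathCount_pos (i m : ℕ) : 0 < pathCount i m := by
  set n := m + 2 * i + 1 with hn
  -- Finiteness
  have hfin : Finite {s : Fin n → ℤ //
      (∀ t, s t = 1 ∨ s t = -1) ∧
      (Finset.univ.filter fun t => s t = 1).card = i ∧
      ∀ T : ℕ, T ≤ m + 2 * i →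
        0 ≤ (m : ℤ) + ∑ t ∈ Finset.univ.filter (fun t : Fin n => (t : ℕ) < T), s t} := by
    apply Finite.of_injective (fun s => (fun t => decide (s.1 t = 1) : Fin n → Bool))
    intro s s' h
    ext t
    have h1 := s.2.1 t
    have h2 := s'.2.1 t
    have := congrFun h t
    simp only [decide_eq_decide] at this
    rcases h1 with h1 | h1 <;> rcases h2 with h2 | h2 <;> simp_all
  -- Nonempty: witness
  have hne : Nonempty {s : Fin n → ℤ //
      (∀ t, s t = 1 ∨ s t = -1) ∧
      (Finset.univ.filter fun t => s t = 1).card = i ∧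
      ∀ T : ℕ, T ≤ m + 2 * i →
        0 ≤ (m : ℤ) + ∑ t ∈ Finset.univ.filter (fun t : Fin n => (t : ℕ) < T), s t} := by
    refine ⟨⟨fun t => if (t : ℕ) < i then 1 else -1, ?_, ?_, ?_⟩⟩
    · intro t; by_cases h : (t : ℕ) < i <;> simp [h]
    · have : (Finset.univ.filter fun t : Fin n =>
          (if (t : ℕ) < i then (1 : ℤ) else -1) = 1) =
          Finset.univ.filter fun t : Fin n => (t : ℕ) < i := by
        ext t; by_cases h : (t : ℕ) < i <;> simp [h]
      rw [this, card_filter_val_lt n i (by omega)]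
    · intro T hT
      rw [← Finset.sum_filter_add_sum_filter_not _ (fun t : Fin n => (t : ℕ) < i)]
      have hA : (Finset.filter (fun t : Fin n => (t : ℕ) < i)
          (Finset.univ.filter fun t : Fin n => (t : ℕ) < T)) =
          Finset.univ.filter fun t : Fin n => (t : ℕ) < min T i := by
        ext t; simp only [Finset.mem_filter, Finset.mem_univ, true_and]; omega
      have e1 : ∀ t ∈ Finset.univ.filter fun t : Fin n => (t : ℕ) < min T i,
          (if (t : ℕ) < i then (1 : ℤ) else -1) = 1 := by
        intro t ht
        simp only [Finset.mem_filter] at ht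
        simp [show (t : ℕ) < i by omega]
      have hsum1 : ∑ t ∈ Finset.filter (fun t : Fin n => (t : ℕ) < i)
          (Finset.univ.filter fun t : Fin n => (t : ℕ) < T),
          (if (t : ℕ) < i then (1 : ℤ) else -1) = (min T i : ℤ) := by
        rw [hA, Finset.sum_congr rfl e1, Finset.sum_const,
          card_filter_val_lt n (min T i) (by omega)]
        simp
      have hB : (Finset.filter (fun t : Fin n => ¬ (t : ℕ) < i)
          (Finset.univ.filter fun t : Fin n => (t : ℕ) < T)) =
          (Finset.univ.filter fun t : Fin n => (t : ℕ) < T) \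
          (Finset.univ.filter fun t : Fin n => (t : ℕ) < min T i) := by
        ext t; simp [Finset.mem_filter]; omega
      have hcard : (Finset.filter (fun t : Fin n => ¬ (t : ℕ) < i)
          (Finset.univ.filter fun t : Fin n => (t : ℕ) < T)).card = T - min T i := by
        rw [hB, Finset.card_sdiff_of_subset (by intro t; simp; omega),
          card_filter_val_lt n T (by omega), card_filter_val_lt n (min T i) (by omega)]
      have e2 : ∀ t ∈ Finset.filter (fun t : Fin n => ¬ (t : ℕ) < i)
          (Finset.univ.filter fun t : Fin n => (t : ℕ) < T),
          (if (t : ℕ) < i then (1 : ℤ) else -1) = -1 := by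
        intro t ht
        simp only [Finset.mem_filter] at ht
        simp [ht.2]
      have hsum2 : ∑ t ∈ Finset.filter (fun t : Fin n => ¬ (t : ℕ) < i)
          (Finset.univ.filter fun t : Fin n => (t : ℕ) < T),
          (if (t : ℕ) < i then (1 : ℤ) else -1) = -((T - min T i : ℕ) : ℤ) := by
        rw [Finset.sum_congr rfl e2, Finset.sum_const, hcard]
        simp
      rw [hsum1, hsum2]
      omega
  exact Nat.card_pos

/-- If `0 < I < 1`, the success probability of a time-restricted double-spending attack is
strictly increasing in the time restriction `L`. -/
theorem P_TR_strictMono (I : ℝ) (hI0 : 0 < I) (hI1 : I < 1) (Z L : ℕ) :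
    P_TR I Z L < P_TR I Z (L + 1) := by
  have key : P_TR I Z (L + 1) - P_TR I Z L =
      ∑ k ∈ Finset.range (Z + 2),
        (Nat.choose (k + Z) k : ℝ) * I ^ k * (1 - I) ^ (Z + 1) *
          ((pathCount L (Z + 1 - k) : ℝ) * (1 - I) ^ L * I ^ (Z + 2 - k + L)) := by
    unfold P_TR
    rw [show ∀ a b : ℝ, (1 - a) - (1 - b) = b - a by intros; ring, ← Finset.sum_sub_distrib]
    refine Finset.sum_congr rfl fun k _ => ?_
    rw [Finset.sum_range_succ]
    ring
  have hpos : 0 < ∑ k ∈ Finset.range (Z + 2),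
      (Nat.choose (k + Z) k : ℝ) * I ^ k * (1 - I) ^ (Z + 1) *
        ((pathCount L (Z + 1 - k) : ℝ) * (1 - I) ^ L * I ^ (Z + 2 - k + L)) := by
    refine Finset.sum_pos' (fun k _ => ?_) ⟨0, Finset.mem_range.2 (by omega), ?_⟩
    · have h1 : (0 : ℝ) < 1 - I := by linarith
      positivity
    · have h1 : (0 : ℝ) < 1 - I := by linarith
      have h2 : (0 : ℝ) < (pathCount L (Z + 1 - 0) : ℝ) :=
        Nat.cast_pos.2 (pathCount_pos L (Z + 1 - 0))
      have h3 : (0 : ℝ) < (Nat.choose (0 + Z) 0 : ℝ) := by simp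
      exact mul_pos (mul_pos (mul_pos h3 (pow_pos hI0 0)) (pow_pos h1 _))
        (mul_pos (mul_pos h2 (pow_pos h1 _)) (pow_pos hI0 _))
  linarith
end

section
/- If 0 ≤ I < 1, then for all nonnegative integers Z and L, the success probability of a time-restricted double-spending attack is strictly smaller than one: P_TR(I,Z,L) < 1; in particular this holds even when 1/2 ≤ I < 1, i.e., even when the attacker controls a majority of the hash rate. -/
lemma card_lt_aux (n T : ℕ) : (Finset.univ.filter fun t : Fin n => (t : ℕ) < T).card = min T n := by
  rw [← Finset.card_range (min T n)]
  apply Finset.card_nbij (i := Fin.val)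
  · intro a ha; simp [Nat.lt_min] at ha ⊢; omega
  · intro a ha b hb h; exact Fin.val_injective h
  · intro a ha; simp [Nat.lt_min] at ha ⊢; exact ⟨⟨a, ha.2⟩, ha.1, rfl⟩

def Ok (n j : ℕ) (M : ℤ) (b : ℕ) (s : Fin n → ℤ) : Prop :=
  (∀ t, s t = 1 ∨ s t = -1) ∧
  (Finset.univ.filter fun t => s t = 1).card = j ∧
  ∀ T : ℕ, T ≤ b →
    0 ≤ M + ∑ t ∈ Finset.univ.filter (fun t : Fin n => (t : ℕ) < T), s t

noncomputable def cnt (n j : ℕ) (M : ℤ) (b : ℕ) : ℕ := Nat.card {s : Fin n → ℤ // Ok n j M b s}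

lemma pathCount_eq_cnt (i m : ℕ) : pathCount i m = cnt (m+2*i+1) i m (m+2*i) := rfl

theorem finite_pm {n : ℕ} {P : (Fin n → ℤ) → Prop} (h : ∀ s, P s → ∀ t, s t = 1 ∨ s t = -1) :
    Finite {s // P s} := by
  apply Finite.of_injective (f := fun s : {s // P s} => fun t => decide (s.1 t = 1))
  rintro ⟨s, hs⟩ ⟨s', hs'⟩ hf
  ext t
  have h1 := h s hs t
  have h2 := h s' hs' t
  have := congrFun hf t
  simp only [decide_eq_decide] at this
  rcases h1 with h1 | h1 <;> rcases h2 with h2 | h2 <;> simp [h1, h2] at this ⊢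

lemma cnt_of_neg {M : ℤ} (hM : M < 0) (n j b : ℕ) : cnt n j M b = 0 := by
  have : IsEmpty {s : Fin n → ℤ // Ok n j M b s} := by
    constructor
    rintro ⟨s, hs⟩
    have := hs.2.2 0 (Nat.zero_le b)
    simp at this
    omega
  exact Nat.card_of_isEmpty

lemma cnt_j0 (n : ℕ) (M : ℤ) (b : ℕ) (hb : (b : ℤ) ≤ M) : cnt n 0 M b = 1 := by
  have : Unique {s : Fin n → ℤ // Ok n 0 M b s} := by
    refine ⟨⟨⟨fun _ => -1, ?_, ?_, ?_⟩⟩, ?_⟩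
    · intro t; right; rfl
    · simp
    · intro T hT
      rw [Finset.sum_const, card_lt_aux]
      have : (min T n : ℤ) ≤ T := by exact_mod_cast Nat.min_le_left T n
      simp only [nsmul_eq_mul, mul_neg_one]
      omega
    · rintro ⟨s, hs⟩
      have hcard := hs.2.1
      rw [Finset.card_eq_zero] at hcard
      ext t
      rcases hs.1 t with h | h
      · exfalso
        have : t ∈ Finset.univ.filter fun t => s t = 1 := by simp [h]
        simp [hcard] at this
      · simp [h]
  exact Nat.card_unique

lemma card_filter_succ {n : ℕ} (s : Fin (n+1) → ℤ) :
    (Finset.univ.filter fun t => s t = 1).card =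
      (if s 0 = 1 then 1 else 0) + (Finset.univ.filter fun t : Fin n => s t.succ = 1).card := by
  rw [Finset.card_filter, Finset.card_filter, Fin.sum_univ_succ]

lemma psum_succ {n : ℕ} (s : Fin (n+1) → ℤ) (T : ℕ) :
    ∑ t ∈ Finset.univ.filter (fun t : Fin (n+1) => (t : ℕ) < T + 1), s t =
      s 0 + ∑ t ∈ Finset.univ.filter (fun t : Fin n => (t : ℕ) < T), s t.succ := by
  rw [Finset.sum_filter, Finset.sum_filter, Fin.sum_univ_succ]
  simp [Nat.succ_lt_succ_iff]

lemma split_card (n j : ℕ) (M : ℤ) (b : ℕ) :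
    cnt (n+1) j M (b+1) =
      Nat.card {s : Fin (n+1) → ℤ // Ok (n+1) j M (b+1) s ∧ s 0 = 1} +
      Nat.card {s : Fin (n+1) → ℤ // Ok (n+1) j M (b+1) s ∧ s 0 = -1} := by
  have f1 : Finite {s : Fin (n+1) → ℤ // Ok (n+1) j M (b+1) s ∧ s 0 = 1} :=
    finite_pm (fun s hs => hs.1.1)
  have f2 : Finite {s : Fin (n+1) → ℤ // Ok (n+1) j M (b+1) s ∧ s 0 = -1} :=
    finite_pm (fun s hs => hs.1.1)
  rw [cnt, ← Nat.card_sum]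
  apply Nat.card_congr
  refine Equiv.trans (Equiv.sumCompl (fun x : {s // Ok (n+1) j M (b+1) s} => x.1 0 = 1)).symm ?_
  apply Equiv.sumCongr
  · exact Equiv.subtypeSubtypeEquivSubtypeInter (Ok (n+1) j M (b+1)) (fun s => s 0 = 1)
  · refine Equiv.trans
      (Equiv.subtypeSubtypeEquivSubtypeInter (Ok (n+1) j M (b+1)) (fun s => ¬ s 0 = 1)) ?_
    apply Equiv.subtypeEquivRight
    intro s
    constructor
    · rintro ⟨hok, hne⟩; exact ⟨hok, (hok.1 0).resolve_left hne⟩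
    · rintro ⟨hok, hne⟩; exact ⟨hok, by rw [hne]; decide⟩

lemma card_tail (n j' : ℕ) (M c : ℤ) (hM : 0 ≤ M) (hc : c = 1 ∨ c = -1) (b : ℕ) :
    Nat.card {s : Fin (n+1) → ℤ //
        Ok (n+1) (j' + if c = 1 then 1 else 0) M (b+1) s ∧ s 0 = c}
      = cnt n j' (M + c) b := by
  apply Nat.card_congr
  refine ⟨fun x => ⟨Fin.tail x.1, ?_, ?_, ?_⟩, fun y => ⟨Fin.cons c y.1, ⟨?_, ?_, ?_⟩, ?_⟩,
      ?_, ?_⟩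
  · intro t; exact x.2.1.1 t.succ
  · have hcf := card_filter_succ x.1
    rw [x.2.2, x.2.1.2.1] at hcf
    simp only [Fin.tail]
    have e : (Finset.univ.filter fun t : Fin n => x.1 t.succ = 1).card = j' := by omega
    exact e
  · intro T hT
    have := x.2.1.2.2 (T+1) (by omega)
    rw [psum_succ, x.2.2] at this
    simp only [Fin.tail]
    linarith
  · intro t
    refine Fin.cases ?_ ?_ t
    · rw [Fin.cons_zero]; exact hc
    · intro t'; rw [Fin.cons_succ]; exact y.2.1 t'
  · have hcf := card_filter_succ (Fin.cons c y.1)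
    simp only [Fin.cons_zero, Fin.cons_succ] at hcf
    rw [y.2.2.1] at hcf
    omega
  · intro T hT
    match T with
    | 0 => simpa using hM
    | (T'+1) =>
      rw [psum_succ]
      simp only [Fin.cons_zero, Fin.cons_succ]
      have := y.2.2.2 T' (by omega)
      linarith
  · simp
  · rintro ⟨s, hs⟩
    apply Subtype.ext
    simp only
    rw [← hs.2]
    exact Fin.cons_self_tail s
  · rintro ⟨s', hs'⟩
    apply Subtype.ext
    simp

lemma cnt_congr {n n' b b' : ℕ} (j : ℕ) (M : ℤ) (h1 : n = n') (h2 : b = b') :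
    cnt n j M b = cnt n' j M b' := by subst h1; subst h2; rfl

lemma cnt_succ (n i b : ℕ) (M : ℤ) (hM : 0 ≤ M) :
    cnt (n+1) (i+1) M (b+1) = cnt n i (M+1) b + cnt n (i+1) (M-1) b := by
  rw [split_card]
  congr 1
  · have := card_tail n i M 1 hM (Or.inl rfl) b
    simpa using this
  · have := card_tail n (i+1) M (-1) hM (Or.inr rfl) b
    norm_num at this
    rw [sub_eq_add_neg]
    exact this

def pc : ℕ → ℕ → ℕ
  | 0, _ => 1
  | i+1, 0 => pc i 1
  | i+1, m+1 => pc i (m+2) + pc (i+1) m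
termination_by i m => (i, m)

lemma pc_zero (m : ℕ) : pc 0 m = 1 := by rw [pc]
lemma pc_s0 (i : ℕ) : pc (i+1) 0 = pc i 1 := by rw [pc]
lemma pc_ss (i m : ℕ) : pc (i+1) (m+1) = pc i (m+2) + pc (i+1) m := by rw [pc]

theorem pathCount_eq_s15 : ∀ i m, pathCount i m = pc i m
  | 0, m => by
    rw [pathCount_eq_cnt, pc]
    apply cnt_j0
    push_cast; omega
  | i+1, 0 => by
    rw [pathCount_eq_cnt, pc]
    rw [cnt_congr (i+1) _ (show (0+2*(i+1)+1 : ℕ) = (2*i+2)+1 by omega)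
      (show (0+2*(i+1) : ℕ) = (2*i+1)+1 by omega)]
    rw [show ((0:ℕ):ℤ) = 0 by norm_num]
    rw [cnt_succ _ _ _ _ (le_refl 0)]
    rw [cnt_of_neg (show (0-1:ℤ) < 0 by norm_num)]
    rw [show (0+1 : ℤ) = ((1:ℕ):ℤ) by norm_num]
    rw [cnt_congr i _ (show (2*i+2 : ℕ) = 1+2*i+1 by omega)
      (show (2*i+1 : ℕ) = 1+2*i by omega)]
    rw [← pathCount_eq_cnt, pathCount_eq_s15 i 1]
    omega
  | i+1, m+1 => by
    rw [pathCount_eq_cnt, pc]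
    rw [cnt_congr (i+1) _ (show ((m+1)+2*(i+1)+1 : ℕ) = (m+2*i+3)+1 by omega)
      (show ((m+1)+2*(i+1) : ℕ) = (m+2*i+2)+1 by omega)]
    rw [cnt_succ _ _ _ _ (by positivity)]
    have h3 : ((m+1:ℕ):ℤ) + 1 = ((m+2:ℕ):ℤ) := by push_cast; ring
    have h4 : ((m+1:ℕ):ℤ) - 1 = ((m:ℕ):ℤ) := by push_cast; ring
    rw [h3, h4]
    rw [cnt_congr i _ (show (m+2*i+3 : ℕ) = (m+2)+2*i+1 by omega)
      (show (m+2*i+2 : ℕ) = (m+2)+2*i by omega)]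
    rw [cnt_congr (i+1) _ (show (m+2*i+3 : ℕ) = m+2*(i+1)+1 by omega)
      (show (m+2*i+2 : ℕ) = m+2*(i+1) by omega)]
    rw [← pathCount_eq_cnt, ← pathCount_eq_cnt]
    rw [pathCount_eq_s15 i (m+2), pathCount_eq_s15 (i+1) m]
termination_by i m => (i, m)

/-! ### The analytic bound -/

noncomputable def S (x y : ℝ) (L m : ℕ) : ℝ :=
  ∑ i ∈ Finset.range L, (pc i m : ℝ) * x^i * y^(m+1+i)

lemma S_rec0 (x y : ℝ) (L : ℕ) : S x y (L+1) 0 = y + x * S x y L 1 := by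
  unfold S
  rw [Finset.sum_range_succ' (fun i => (pc i 0 : ℝ) * x^i * y^(0+1+i)) L]
  have key : ∀ i ∈ Finset.range L, (pc (i+1) 0 : ℝ) * x^(i+1) * y^(0+1+(i+1)) =
      x * ((pc i 1 : ℝ) * x^i * y^(1+1+i)) := by
    intro i _; rw [pc_s0]; push_cast; ring
  rw [Finset.sum_congr rfl key, ← Finset.mul_sum, pc_zero]
  push_cast; ring

lemma S_rec (x y : ℝ) (L m : ℕ) :
    S x y (L+1) (m+1) = x * S x y L (m+2) + y * S x y (L+1) m := by
  unfold S
  rw [Finset.sum_range_succ' (fun i => (pc i (m+1) : ℝ) * x^i * y^(m+1+1+i)) L]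
  rw [Finset.sum_range_succ' (fun i => (pc i m : ℝ) * x^i * y^(m+1+i)) L]
  have key : ∀ i ∈ Finset.range L, (pc (i+1) (m+1) : ℝ) * x^(i+1) * y^(m+1+1+(i+1)) =
      x * ((pc i (m+2):ℝ) * x^i * y^(m+2+1+i)) +
      y * ((pc (i+1) m : ℝ) * x^(i+1) * y^(m+1+(i+1))) := by
    intro i _; rw [pc_ss]; push_cast; ring
  rw [Finset.sum_congr rfl key, Finset.sum_add_distrib, ← Finset.mul_sum, ← Finset.mul_sum]
  rw [pc_zero, pc_zero]
  push_cast; ring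

lemma S_le {x y : ℝ} (hx : 0 < x) (hy : 0 ≤ y) (hxy : x + y = 1) :
    ∀ L m, S x y L m ≤ 1 - x^(m+2*L) := by
  have hx1 : x ≤ 1 := by nlinarith
  intro L
  induction L with
  | zero =>
    intro m
    simp [S]
    calc x ^ (m + 2*0) ≤ 1 := pow_le_one₀ hx.le hx1
  | succ L ih =>
    intro m
    induction m with
    | zero =>
      rw [S_rec0]
      have h1 := ih 1
      have hpow : x * x^(1+2*L) = x^(0+2*(L+1)) := by ring
      nlinarith [pow_nonneg hx.le (1+2*L)]
    | succ m ihm =>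
      rw [S_rec]
      have h1 := ih (m+2)
      have h2 : S x y (L+1) m ≤ 1 - x^(m+2+2*L) := by
        rw [show (m+2+2*L) = m+2*(L+1) from by omega]; exact ihm
      have goalpow : x^(m+1+2*(L+1)) ≤ x^(m+2+2*L) := by
        apply pow_le_pow_of_le_one hx.le hx1; omega
      nlinarith [pow_nonneg hx.le (m+2+2*L)]

lemma S_nonneg {x y : ℝ} (hx : 0 ≤ x) (hy : 0 ≤ y) (L m : ℕ) : 0 ≤ S x y L m := by
  apply Finset.sum_nonneg
  intro i _
  positivity

/-- If `0 ≤ I < 1`, the success probability of a time-restricted double-spending attack is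
strictly smaller than one, in particular even when `1/2 ≤ I < 1`. -/
theorem P_TR_lt_one (I : ℝ) (hI0 : 0 ≤ I) (hI1 : I < 1) (Z L : ℕ) :
    P_TR I Z L < 1 := by
  unfold P_TR
  have hx : (0:ℝ) < 1 - I := by linarith
  have hrw : ∀ k ∈ Finset.range (Z+2),
      (∑ i ∈ Finset.range L, (pathCount i (Z+1-k):ℝ) * (1-I)^i * I^(Z+2-k+i))
        = S (1-I) I L (Z+1-k) := by
    intro k hk
    simp only [Finset.mem_range] at hk
    unfold S
    apply Finset.sum_congr rfl
    intro i _
    rw [pathCount_eq_s15]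
    rw [show Z+2-k+i = (Z+1-k)+1+i from by omega]
  have key : ∀ k : ℕ, 0 < 1 - S (1-I) I L (Z+1-k) := fun k => by
    have h1 := S_le hx hI0 (by ring) L (Z+1-k)
    have h2 := pow_pos hx ((Z+1-k)+2*L)
    linarith
  have hpos : 0 < ∑ k ∈ Finset.range (Z + 2),
      (Nat.choose (k + Z) k : ℝ) * I ^ k * (1 - I) ^ (Z + 1) *
        (1 - ∑ i ∈ Finset.range L,
          (pathCount i (Z + 1 - k) : ℝ) * (1 - I) ^ i * I ^ (Z + 2 - k + i)) := by
    apply Finset.sum_pos'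
    · intro k hk
      rw [hrw k hk]
      exact mul_nonneg (mul_nonneg (mul_nonneg (Nat.cast_nonneg _) (pow_nonneg hI0 k))
        (pow_nonneg hx.le _)) (le_of_lt (key k))
    · refine ⟨0, by simp, ?_⟩
      rw [hrw 0 (by simp)]
      have h1 := key 0
      have h2 := pow_pos hx (Z+1)
      simp only [Nat.choose_zero_right, Nat.cast_one, pow_zero, one_mul, Nat.zero_add]
      positivity
  linarith
end
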